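/- Let C_1,...,C_s be [m, k_i, d_i] linear codes over F_q and A a full-rank s×l matrix over F_q (s ≤ l). Then the matrix-product code [C_1,...,C_s]·A has length ml, dimension Σ k_i, and minimum distance at least min_{1≤i≤s} {d_i δ_i}, where δ_i is the minimum distance of the code in F_q^l generated by the first i rows of A. -/

import Mathlib

open Matrix

/-- The matrix-product code `[C_1,...,C_s]·A`, as a subset of `F^{l·m}` indexed by
`Fin l × Fin m`. -/
def matrixProductCode {F : Type} [Field F] {s l m : ℕ}
    (C : Fin s → Set (Fin m → F)) (A : Matrix (Fin s) (Fin l) F) :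
    Set (Fin l × Fin m → F) :=
  {x | ∃ c : Fin s → Fin m → F, (∀ i, c i ∈ C i) ∧ ∀ j r, x (j, r) = ∑ i, A i j * c i r}

/-- The linear map sending `(c_1,...,c_s)` to the matrix-product codeword. -/
def mpcLinearMap {F : Type} [Field F] {s l m : ℕ} (A : Matrix (Fin s) (Fin l) F) :
    (Fin s → Fin m → F) →ₗ[F] (Fin l × Fin m → F) where
  toFun c := fun p => ∑ i, A i p.1 * c i p.2
  map_add' c c' := by funext p; simp [mul_add, Finset.sum_add_distrib]
  map_smul' a c := by funext p; simp [Finset.mul_sum, mul_left_comm]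

/-- `Π i, p i` is linearly equivalent to `Submodule.pi Set.univ p`. -/
def piSubmoduleEquiv {F : Type} [Field F] {ι : Type} {M : ι → Type}
    [∀ i, AddCommGroup (M i)] [∀ i, Module F (M i)] (p : ∀ i, Submodule F (M i)) :
    (∀ i, p i) ≃ₗ[F] Submodule.pi Set.univ p where
  toFun v := ⟨fun i => v i, fun i _ => (v i).2⟩
  invFun w i := ⟨w.1 i, w.2 i trivial⟩
  map_add' v v' := rfl
  map_smul' a v := rfl
  left_inv v := rfl
  right_inv w := rfl

/-- For `[m, k_i, d_i]` linear codes `C_i` over `F_q` and a full-rank `s × l`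
matrix `A` (`s ≤ l`), the matrix-product code `[C_1,...,C_s]·A` is a linear code of length
`ml`, dimension `∑ k_i`, and minimum distance at least `min_{1≤i≤s} d_i δ_i`, where `δ_i` is
the minimum distance of the code in `F_q^l` generated by the first `i` rows of `A`. -/
theorem matrixProduct_parameters
    (Q s l m : ℕ) (hQ : IsPrimePow Q) (hs : 0 < s) (hsl : s ≤ l)
    (F : Type) [Field F] [Fintype F] [DecidableEq F] (hF : Fintype.card F = Q)
    (C : Fin s → Submodule F (Fin m → F))
    (k d : Fin s → ℕ)
    (hk : ∀ i, Module.finrank F (C i) = k i)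
    (hd : ∀ i, (∀ x ∈ C i, x ≠ 0 → d i ≤ hammingNorm x) ∧
      (∃ x ∈ C i, x ≠ 0 ∧ hammingNorm x = d i))
    (A : Matrix (Fin s) (Fin l) F) (hA : A.rank = s)
    (δ : Fin s → ℕ)
    (hδ : ∀ i : Fin s,
      (∀ x ∈ Submodule.span F {r : Fin l → F | ∃ i' ≤ i, r = A i'}, x ≠ 0 →
        δ i ≤ hammingNorm x) ∧
      (∃ x ∈ Submodule.span F {r : Fin l → F | ∃ i' ≤ i, r = A i'},
        x ≠ 0 ∧ hammingNorm x = δ i)) :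
    ∃ D : Submodule F (Fin l × Fin m → F),
      (D : Set (Fin l × Fin m → F)) =
          matrixProductCode (fun i => (C i : Set (Fin m → F))) A ∧
        Module.finrank F D = ∑ i, k i ∧
        (∀ x ∈ D, x ≠ 0 →
          (Finset.univ.inf' (Finset.univ_nonempty_iff.mpr ⟨⟨0, hs⟩⟩)
            fun i => d i * δ i) ≤ hammingNorm x) := by
  classical
  -- rows of A are linearly independent
  have hind : LinearIndependent F (fun i => A i) := by
    apply linearIndependent_iff_card_eq_finrank_span.mpr
    rw [Set.finrank]
    change Fintype.card (Fin s) = Module.finrank F (Submodule.span F (Set.range A.row))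
    rw [← Matrix.rank_eq_finrank_span_row, hA, Fintype.card_fin]
  have hind' := Fintype.linearIndependent_iff.mp hind
  set L := mpcLinearMap (m := m) A with hL
  have hLapp : ∀ c p, L c p = ∑ i, A i p.1 * c i p.2 := fun c p => rfl
  -- key: L c, viewed rowwise, is a combination of rows of A
  have hrow : ∀ (c : Fin s → Fin m → F) (r : Fin m),
      (fun j => L c (j, r)) = ∑ i, c i r • A i := by
    intro c r
    funext j
    simp only [hLapp, Finset.sum_apply, Pi.smul_apply, smul_eq_mul, mul_comm]
  have hinj : Function.Injective L := by
    rw [← LinearMap.ker_eq_bot, LinearMap.ker_eq_bot']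
    intro c hc
    funext i r
    have h0 : (fun j => L c (j, r)) = 0 := by rw [hc]; rfl
    rw [hrow] at h0
    exact hind' (fun i => c i r) h0 i
  set P : Submodule F (Fin s → Fin m → F) := Submodule.pi Set.univ C with hP
  refine ⟨Submodule.map L P, ?_, ?_, ?_⟩
  · ext x
    simp only [SetLike.mem_coe, Submodule.mem_map, matrixProductCode, Set.mem_setOf_eq]
    constructor
    · rintro ⟨c, hc, rfl⟩
      exact ⟨c, fun i => hc i trivial, fun j r => rfl⟩
    · rintro ⟨c, hc, hx⟩
      refine ⟨c, fun i _ => hc i, ?_⟩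
      funext p
      rw [hLapp]
      exact (hx p.1 p.2).symm
  · rw [(Submodule.equivMapOfInjective L hinj P).symm.finrank_eq,
      ((piSubmoduleEquiv C).symm.finrank_eq), Module.finrank_pi_fintype]
    exact Finset.sum_congr rfl fun i _ => hk i
  · rintro x hx hx0
    obtain ⟨c, hcP, rfl⟩ := hx
    have hcC : ∀ i, c i ∈ C i := fun i => hcP i trivial
    have hc0 : c ≠ 0 := fun h => hx0 (by rw [h, map_zero])
    obtain ⟨i0, hi0⟩ : ∃ i, c i ≠ 0 := by
      by_contra h; push_neg at h; exact hc0 (funext h)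
    have hT : (Finset.univ.filter fun i => c i ≠ 0).Nonempty := ⟨i0, by simp [hi0]⟩
    set t := (Finset.univ.filter fun i => c i ≠ 0).max' hT with ht
    have htmem : c t ≠ 0 := by
      have := (Finset.univ.filter fun i => c i ≠ 0).max'_mem hT
      simpa using this
    have hle : ∀ i, c i ≠ 0 → i ≤ t := fun i hi => Finset.le_max' _ i (by simp [hi])
    -- rowwise weight decomposition
    have hdecomp : hammingNorm (L c) = ∑ r, hammingNorm (fun j => L c (j, r)) := by
      simp only [hammingNorm, Finset.card_filter]
      rw [show (Finset.univ : Finset (Fin l × Fin m)) = Finset.univ ×ˢ Finset.univ from rfl,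
        Finset.sum_product]
      rw [Finset.sum_comm]
    set S := (Finset.univ.filter fun r => c t r ≠ 0) with hS
    have hScard : S.card = hammingNorm (c t) := rfl
    have hrowwt : ∀ r ∈ S, δ t ≤ hammingNorm (fun j => L c (j, r)) := by
      intro r hr
      have hr' : c t r ≠ 0 := by simpa [hS] using hr
      apply (hδ t).1
      · rw [hrow]
        apply Submodule.sum_mem
        intro i _
        rcases eq_or_ne (c i r) 0 with h | h
        · rw [h, zero_smul]; exact Submodule.zero_mem _
        · have hit : i ≤ t := hle i (fun h0 => h (congrFun h0 r))
          exact Submodule.smul_mem _ _ (Submodule.subset_span ⟨i, hit, rfl⟩)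
      · intro h0
        rw [hrow] at h0
        exact hr' (hind' (fun i => c i r) h0 t)
    calc (Finset.univ.inf' (Finset.univ_nonempty_iff.mpr ⟨⟨0, hs⟩⟩) fun i => d i * δ i)
        ≤ d t * δ t := Finset.inf'_le _ (Finset.mem_univ t)
      _ ≤ hammingNorm (c t) * δ t :=
          Nat.mul_le_mul_right _ ((hd t).1 (c t) (hcC t) htmem)
      _ = S.card * δ t := by rw [hScard]
      _ ≤ ∑ r ∈ S, hammingNorm (fun j => L c (j, r)) := by
          simpa [mul_comm] using Finset.card_nsmul_le_sum S _ (δ t) hrowwt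
      _ ≤ ∑ r, hammingNorm (fun j => L c (j, r)) :=
          Finset.sum_le_sum_of_subset (Finset.subset_univ S)
      _ = hammingNorm (L c) := hdecomp.symm
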